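/- For coprime integers t > u ≥ 1 and c ∈ ℂ*, the polynomial y^t + c x^u z^{t−u} is irreducible in ℂ[x,y,z]. -/

import Mathlib

open MvPolynomial

set_option maxHeartbeats 1000000
set_option synthInstance.maxHeartbeats 400000

lemma aux_no_pow {R : Type*} [CommRing R] [IsDomain R] [WfDvdMonoid R]
    {K : Type*} [Field K] [Algebra R K] [IsFractionRing R K]
    {q : R} (hq : Prime q) {p α : ℕ} (hp : p ≠ 0) (hpα : ¬ p ∣ α)
    {w v : R} (hw : ¬ q ∣ w) (hv : ¬ q ∣ v) (hw0 : w ≠ 0) (b : K) :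
    b ^ p * algebraMap R K v ≠ algebraMap R K (q ^ α * w) := by
  intro h
  obtain ⟨r, s, hs, rfl⟩ := IsFractionRing.div_surjective (A := R) b
  have hs0 : s ≠ 0 := nonZeroDivisors.ne_zero hs
  have hsK : algebraMap R K s ≠ 0 := fun hh =>
    hs0 (IsFractionRing.injective R K (by rw [hh, map_zero]))
  have key : r ^ p * v = q ^ α * w * s ^ p := by
    apply IsFractionRing.injective R K
    rw [map_mul, map_pow, map_mul, map_mul, map_pow, map_pow]
    rw [div_pow] at h
    field_simp at h
    rw [map_mul, map_pow] at h
    linear_combination h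
  have hr0 : r ≠ 0 := by
    rintro rfl
    simp only [zero_pow hp, zero_mul] at key
    exact (mul_ne_zero (mul_ne_zero (pow_ne_zero _ hq.ne_zero) hw0) (pow_ne_zero _ hs0)) key.symm
  have fr : FiniteMultiplicity q r := FiniteMultiplicity.of_not_isUnit hq.not_isUnit hr0
  have fs : FiniteMultiplicity q s := FiniteMultiplicity.of_not_isUnit hq.not_isUnit hs0
  have e1 : emultiplicity q (r ^ p * v) = (p * multiplicity q r : ℕ) := by
    rw [emultiplicity_mul hq, emultiplicity_pow hq, emultiplicity_eq_zero.2 hv,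
      fr.emultiplicity_eq_multiplicity]
    push_cast; ring
  have e2 : emultiplicity q (q ^ α * w * s ^ p) = (α + p * multiplicity q s : ℕ) := by
    rw [emultiplicity_mul hq, emultiplicity_mul hq, emultiplicity_pow_self_of_prime hq,
      emultiplicity_eq_zero.2 hw, emultiplicity_pow hq, fs.emultiplicity_eq_multiplicity]
    push_cast; ring
  rw [key, e2] at e1
  have e3 : α + p * multiplicity q s = p * multiplicity q r := by exact_mod_cast e1
  have d1 : p ∣ p * multiplicity q r - p * multiplicity q s :=
    Nat.dvd_sub (Dvd.intro _ rfl) (Dvd.intro _ rfl)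
  have e4 : α = p * multiplicity q r - p * multiplicity q s := by omega
  exact hpα (e4 ▸ d1)

noncomputable abbrev R2 : Type := MvPolynomial (Fin 2) ℂ
noncomputable abbrev K2 : Type := FractionRing R2

lemma prime_X0 : Prime (X 0 : MvPolynomial (Fin 2) ℂ) := by
  rw [← MulEquiv.prime_iff (finSuccEquiv ℂ 1).toMulEquiv]
  simpa [finSuccEquiv_X_zero] using Polynomial.prime_X (R := MvPolynomial (Fin 1) ℂ)

lemma fse_C (c : ℂ) : finSuccEquiv ℂ 2 (C c) = Polynomial.C (C c) := by
  simp [finSuccEquiv_apply]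

lemma not_X0_dvd {c : ℂ} (hc : c ≠ 0) {k : ℕ} (d : MvPolynomial (Fin 2) ℂ)
    (hd : d = C c * X 1 ^ k ∨ d = -(C c) * X 1 ^ k) :
    ¬ (X 0 : MvPolynomial (Fin 2) ℂ) ∣ d := by
  rintro ⟨e, he⟩
  rcases hd with rfl | rfl <;>
  · have := congrArg (eval (fun j => if j = 0 then (0:ℂ) else 1)) he
    simp [hc] at this

theorem irreducible_standard_factor (t u : ℕ) (hu : 1 ≤ u) (hut : u < t)
    (hgcd : Nat.gcd u t = 1) (c : ℂ) (hc : c ≠ 0) :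
    Irreducible (X 1 ^ t + C c * X 0 ^ u * X 2 ^ (t - u) : MvPolynomial (Fin 3) ℂ) := by
  classical
  have ht0 : t ≠ 0 := by omega
  rcases Nat.even_or_odd t with hteven | htodd
  · -- t even, hence u odd; use x = X 0 as the main variable
    have huodd : Odd u := by
      rcases Nat.even_or_odd u with hueven | h
      · exfalso
        have : 2 ∣ Nat.gcd u t := Nat.dvd_gcd hueven.two_dvd hteven.two_dvd
        omega
      · exact h
    suffices h : Irreducible (finSuccEquiv ℂ 2
        (X 1 ^ t + C c * X 0 ^ u * X 2 ^ (t - u) : MvPolynomial (Fin 3) ℂ)) from h.of_map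
    have himg : (finSuccEquiv ℂ 2
        (X 1 ^ t + C c * X 0 ^ u * X 2 ^ (t - u) : MvPolynomial (Fin 3) ℂ))
        = Polynomial.C ((X 0 : MvPolynomial (Fin 2) ℂ) ^ t)
          + Polynomial.C (C c * X 1 ^ (t - u)) * Polynomial.X ^ u := by
      have e1 : ((1 : Fin 3)) = Fin.succ 0 := rfl
      have e2 : ((2 : Fin 3)) = Fin.succ 1 := rfl
      rw [map_add, map_mul, map_mul, map_pow, map_pow, map_pow, e1, e2, fse_C,
        finSuccEquiv_X_zero, finSuccEquiv_X_succ, finSuccEquiv_X_succ,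
        Polynomial.C_mul, Polynomial.C_pow, Polynomial.C_pow]
      ring
    rw [himg]
    set g : Polynomial R2 := Polynomial.C ((X 0 : R2) ^ t)
      + Polynomial.C (C c * X 1 ^ (t - u)) * Polynomial.X ^ u with hg
    have hprim : g.IsPrimitive := by
      intro r hr
      rw [Polynomial.C_dvd_iff_dvd_coeff] at hr
      have h0 : r ∣ (X 0 : R2) ^ t := by
        have := hr 0
        simp only [hg, Polynomial.coeff_add, Polynomial.coeff_C_mul, Polynomial.coeff_X_pow,
          Polynomial.coeff_C, if_pos rfl, if_neg (by omega : ¬ (0 : ℕ) = u), mul_zero,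
          add_zero] at this
        exact this
      have hu' : r ∣ C c * X 1 ^ (t - u) := by
        have := hr u
        simp only [hg, Polynomial.coeff_add, Polynomial.coeff_C_mul, Polynomial.coeff_X_pow,
          Polynomial.coeff_C, if_pos rfl, if_neg (by omega : ¬ u = 0), mul_one, if_true,
          zero_add] at this
        exact this
      by_contra hru
      have hr0 : r ≠ 0 := by
        rintro rfl
        exact pow_ne_zero t (X_ne_zero (0 : Fin 2)) (zero_dvd_iff.mp h0)
      obtain ⟨q, hqirr, hqr⟩ := WfDvdMonoid.exists_irreducible_factor hru hr0
      have hqprime : Prime q := (UniqueFactorizationMonoid.irreducible_iff_prime).mp hqirr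
      have hqX : q ∣ (X 0 : R2) := hqprime.dvd_of_dvd_pow (hqr.trans h0)
      have hassoc : Associated q (X 0 : R2) := hqirr.associated_of_dvd prime_X0.irreducible hqX
      have hX0r : (X 0 : R2) ∣ C c * X 1 ^ (t - u) := (hassoc.symm.dvd.trans hqr).trans hu'
      exact not_X0_dvd hc _ (Or.inl rfl) hX0r
    letI : StrongNormalizationMonoid R2 := UniqueFactorizationMonoid.normalizationMonoid
    letI := UniqueFactorizationMonoid.toNormalizedGCDMonoid R2
    rw [hprim.irreducible_iff_irreducible_map_fraction_map (K := K2)]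
    have hmap : g.map (algebraMap R2 K2) = Polynomial.C (algebraMap R2 K2 ((X 0 : R2) ^ t))
        + Polynomial.C (algebraMap R2 K2 (C c * X 1 ^ (t - u))) * Polynomial.X ^ u := by
      simp [hg, Polynomial.map_add, Polynomial.map_mul, Polynomial.map_pow]
    set β : K2 := algebraMap R2 K2 (C c * X 1 ^ (t - u)) with hβdef
    have hv0 : (C c * X 1 ^ (t - u) : R2) ≠ 0 :=
      mul_ne_zero (fun h => hc (by simpa using h)) (pow_ne_zero _ (X_ne_zero _))
    have hβ : β ≠ 0 := fun h =>
      hv0 (IsFractionRing.injective R2 K2 (h.trans (map_zero (algebraMap R2 K2)).symm))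
    set b : K2 := -(algebraMap R2 K2 ((X 0 : R2) ^ t)) / β with hbdef
    have hβb : β * b = -(algebraMap R2 K2 ((X 0 : R2) ^ t)) := by
      rw [hbdef, mul_div_cancel₀ _ hβ]
    have hfact : g.map (algebraMap R2 K2) = Polynomial.C β
        * (Polynomial.X ^ u - Polynomial.C b) := by
      rw [hmap, mul_sub (Polynomial.C β) (Polynomial.X ^ u) (Polynomial.C b),
        ← Polynomial.C_mul, hβb, map_neg]
      ring
    rw [hfact, mul_comm (Polynomial.C β) (Polynomial.X ^ u - Polynomial.C b)]
    have hirr : Irreducible (Polynomial.X ^ u - Polynomial.C b) := by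
      apply X_pow_sub_C_irreducible_of_odd huodd
      intro p hp hpu b' heq
      have hpt : ¬ p ∣ t := by
        intro hdvd
        have h1 : p ∣ (1:ℕ) := hgcd ▸ Nat.dvd_gcd hpu hdvd
        have h2 := Nat.dvd_one.mp h1
        have := hp.two_le
        omega
      refine aux_no_pow prime_X0 hp.ne_zero hpt (w := -1) (v := C c * X 1 ^ (t - u))
        ?_ (not_X0_dvd hc _ (Or.inl rfl)) (by norm_num) b' ?_
      · intro hdvd
        exact prime_X0.not_unit (isUnit_of_dvd_unit hdvd isUnit_one.neg)
      · rw [heq, hbdef, div_mul_cancel₀ _ hβ, map_mul, map_pow, map_neg, map_one]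
        exact (mul_neg_one ((algebraMap R2 K2) (X 0) ^ t)).symm
    exact ((associated_mul_unit_left _ _
      (Polynomial.isUnit_C.mpr (isUnit_iff_ne_zero.mpr hβ))).symm.irreducible hirr)
  · -- t odd; use y = X 1 as the main variable
    suffices h : Irreducible (finSuccEquiv ℂ 2 ((renameEquiv ℂ (Equiv.swap 0 1))
        (X 1 ^ t + C c * X 0 ^ u * X 2 ^ (t - u) : MvPolynomial (Fin 3) ℂ))) from
      h.of_map.of_map
    have himg : (finSuccEquiv ℂ 2 ((renameEquiv ℂ (Equiv.swap 0 1))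
        (X 1 ^ t + C c * X 0 ^ u * X 2 ^ (t - u) : MvPolynomial (Fin 3) ℂ)))
        = Polynomial.X ^ t - Polynomial.C (-(C c * X 0 ^ u * X 1 ^ (t - u)) : R2) := by
      have h1 : (Equiv.swap (0:Fin 3) 1) 1 = 0 := Equiv.swap_apply_right 0 1
      have h0 : (Equiv.swap (0:Fin 3) 1) 0 = 1 := Equiv.swap_apply_left 0 1
      have h2 : (Equiv.swap (0:Fin 3) 1) 2 = 2 :=
        Equiv.swap_apply_of_ne_of_ne (by decide) (by decide)
      have e1 : ((1 : Fin 3)) = Fin.succ 0 := rfl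
      have e2 : ((2 : Fin 3)) = Fin.succ 1 := rfl
      rw [renameEquiv_apply, map_add, map_mul, map_mul, map_pow, map_pow, map_pow,
        rename_X, rename_X, rename_X, rename_C, h1, h0, h2, e1, e2,
        map_add, map_mul, map_mul, map_pow, map_pow, map_pow, fse_C,
        finSuccEquiv_X_zero, finSuccEquiv_X_succ, finSuccEquiv_X_succ]
      rw [map_neg, sub_neg_eq_add, Polynomial.C_mul, Polynomial.C_mul,
        Polynomial.C_pow, Polynomial.C_pow]
    rw [himg]
    have hmonic : (Polynomial.X ^ t
        - Polynomial.C (-(C c * X 0 ^ u * X 1 ^ (t - u)) : R2)).Monic :=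
      Polynomial.monic_X_pow_sub_C _ ht0
    rw [hmonic.irreducible_iff_irreducible_map_fraction_map (K := K2)]
    rw [Polynomial.map_sub, Polynomial.map_pow, Polynomial.map_X, Polynomial.map_C]
    apply X_pow_sub_C_irreducible_of_odd htodd
    intro p hp hpt b heq
    have hpu : ¬ p ∣ u := by
      intro hdvd
      have h1 : p ∣ (1:ℕ) := hgcd ▸ Nat.dvd_gcd hdvd hpt
      have h2 := Nat.dvd_one.mp h1
      have := hp.two_le
      omega
    refine aux_no_pow prime_X0 hp.ne_zero hpu (w := -(C c) * X 1 ^ (t - u)) (v := 1)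
      (not_X0_dvd hc _ (Or.inr rfl))
      (fun h => prime_X0.not_unit (isUnit_of_dvd_one h))
      (mul_ne_zero (neg_ne_zero.mpr (fun h => hc (by simpa using h)))
        (pow_ne_zero _ (X_ne_zero _))) b ?_
    rw [map_one, mul_one, heq]
    exact congrArg _ (by ring)
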